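/- For A = [[0,1],[0,0]], B = [0,1]', B₁ = [1,0]', the matrix Σ₁ = [[1,-1/2],[-1/2,1/2]] is positive definite, the equation AΣ₁ + Σ₁A' + B₁B₁' + BX' + XB' = 0 has the unique solution X giving K = -X'Σ₁⁻¹ = [1, 1], and A - BK is Hurwitz, even though range(B) is not contained in range(B₁). -/

import Mathlib

open Matrix

/-- All eigenvalues (over ℂ) have strictly negative real part. -/
def Hurwitz {n : ℕ} (M : Matrix (Fin n) (Fin n) ℝ) : Prop :=
  ∀ μ ∈ spectrum ℂ (M.map (Complex.ofReal)), μ.re < 0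

lemma aux_hurwitz : Hurwitz (!![(0:ℝ),1;-1,-1]) := by
  intro μ h
  have hmap : (!![(0:ℝ),1;-1,-1]).map Complex.ofReal = !![(0:ℂ),1;-1,-1] := by
    ext i j; fin_cases i <;> fin_cases j <;> simp
  rw [hmap, spectrum.mem_iff, Matrix.isUnit_iff_isUnit_det] at h
  simp only [isUnit_iff_ne_zero, ne_eq, not_not] at h
  have hd : (algebraMap ℂ (Matrix (Fin 2) (Fin 2) ℂ) μ - !![(0:ℂ),1;-1,-1]).det
      = μ^2 + μ + 1 := by
    have : algebraMap ℂ (Matrix (Fin 2) (Fin 2) ℂ) μ = !![μ,0;0,μ] := by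
      ext i j; fin_cases i <;> fin_cases j <;>
        simp [Matrix.algebraMap_eq_diagonal, Matrix.diagonal]
    rw [this]; simp [Matrix.det_fin_two]; ring
  rw [hd] at h
  have h1 : (μ.re)^2 - (μ.im)^2 + μ.re + 1 = 0 := by
    have := congrArg Complex.re h
    simpa [Complex.ext_iff, pow_two, Complex.mul_re] using this
  have h2 : μ.im * (2*μ.re + 1) = 0 := by
    have := congrArg Complex.im h
    simp [pow_two, Complex.mul_im] at this
    ring_nf; ring_nf at this; linarith
  rcases mul_eq_zero.1 h2 with h3 | h3
  · exfalso; rw [h3] at h1; nlinarith [sq_nonneg (μ.re + 1/2)]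
  · nlinarith

/-- Example 1: double integrator with noise entering only the position channel.
Σ₁ is positive definite, the Lyapunov-type equation has a unique solution X which gives
K = -X'Σ₁⁻¹ = [1,1] with A - BK Hurwitz, even though R(B) ⊄ R(B₁). -/
theorem stmt_19 :
    let A : Matrix (Fin 2) (Fin 2) ℝ := !![0, 1; 0, 0]
    let B : Matrix (Fin 2) (Fin 1) ℝ := !![0; 1]
    let B₁ : Matrix (Fin 2) (Fin 1) ℝ := !![1; 0]
    let S : Matrix (Fin 2) (Fin 2) ℝ := !![1, -1/2; -1/2, 1/2]
    S.PosDef ∧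
    (∃! X : Matrix (Fin 2) (Fin 1) ℝ,
      A * S + S * Aᵀ + B₁ * B₁ᵀ + B * Xᵀ + X * Bᵀ = 0) ∧
    (∀ X : Matrix (Fin 2) (Fin 1) ℝ,
      A * S + S * Aᵀ + B₁ * B₁ᵀ + B * Xᵀ + X * Bᵀ = 0 →
        -(Xᵀ * S⁻¹) = (!![1, 1] : Matrix (Fin 1) (Fin 2) ℝ)) ∧
    Hurwitz (A - B * (!![1, 1] : Matrix (Fin 1) (Fin 2) ℝ)) ∧
    ¬ (LinearMap.range B.mulVecLin ≤ LinearMap.range B₁.mulVecLin) := by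
  intro A B B₁ S
  -- uniqueness of X
  have huniq : ∀ X : Matrix (Fin 2) (Fin 1) ℝ,
      A * S + S * Aᵀ + B₁ * B₁ᵀ + B * Xᵀ + X * Bᵀ = 0 → X = !![-1/2; 0] := by
    intro X hX
    have h01 := congrFun (congrFun hX 0) 1
    have h11 := congrFun (congrFun hX 1) 1
    simp [A, B, B₁, S, Matrix.mul_apply, Fin.sum_univ_two, Matrix.add_apply, Matrix.vecHead, Matrix.vecTail, Matrix.transpose_apply, Matrix.vecMul, dotProduct, Matrix.smul_apply, Function.comp] at h01 h11
    ext i j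
    fin_cases i <;> fin_cases j <;> simp <;> linarith
  have hsol : A * S + S * Aᵀ + B₁ * B₁ᵀ + B * (!![-1/2; 0] : Matrix (Fin 2) (Fin 1) ℝ)ᵀ
      + (!![-1/2; 0] : Matrix (Fin 2) (Fin 1) ℝ) * Bᵀ = 0 := by
    ext i j
    fin_cases i <;> fin_cases j <;>
      simp [A, B, B₁, S, Matrix.mul_apply, Fin.sum_univ_two, Matrix.vecHead, Matrix.vecTail, Matrix.transpose_apply, Matrix.smul_apply, Function.comp, Matrix.vecMul, dotProduct] <;> norm_num
  have hSinv : S⁻¹ = !![2, 2; 2, 4] := by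
    apply Matrix.inv_eq_right_inv
    ext i j
    fin_cases i <;> fin_cases j <;>
      simp [S, Matrix.mul_apply, Fin.sum_univ_two, Matrix.one_apply, Matrix.vecHead, Matrix.vecTail, Function.comp] <;> norm_num
  refine ⟨?_, ⟨!![-1/2; 0], hsol, fun X hX => huniq X hX⟩, ?_, ?_, ?_⟩
  · -- PosDef
    rw [Matrix.posDef_iff_dotProduct_mulVec]
    constructor
    · ext i j; fin_cases i <;> fin_cases j <;> simp [S]
    · intro x hx
      have hx' : x 0 ≠ 0 ∨ x 1 ≠ 0 := by
        by_contra h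
        push_neg at h
        exact hx (by ext i; fin_cases i <;> simp [h.1, h.2])
      have : star x ⬝ᵥ S *ᵥ x =
          (x 0 - x 1 / 2)^2 + (x 1)^2 / 4 := by
        simp [S, Matrix.mulVec, dotProduct, Fin.sum_univ_two]
        ring
      rw [this]
      rcases eq_or_ne (x 1) 0 with h1 | h1
      · have h0 : x 0 ≠ 0 := by rcases hx' with h | h; exact h; exact absurd h1 h
        rw [h1]
        have : (x 0)^2 > 0 := by positivity
        nlinarith
      · have : (x 1)^2 / 4 > 0 := by positivity
        nlinarith [sq_nonneg (x 0 - x 1 / 2)]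
  · -- K = [1,1]
    intro X hX
    rw [huniq X hX, hSinv]
    ext i j
    fin_cases i <;> fin_cases j <;>
      simp [Matrix.mul_apply, Fin.sum_univ_two, Matrix.vecHead, Matrix.vecTail, Matrix.transpose_apply, Function.comp] <;> norm_num
  · -- Hurwitz
    have : A - B * (!![1, 1] : Matrix (Fin 1) (Fin 2) ℝ) = !![(0:ℝ),1;-1,-1] := by
      ext i j
      fin_cases i <;> fin_cases j <;>
        simp [A, B, Matrix.mul_apply, Fin.sum_univ_one]
    rw [this]
    exact aux_hurwitz
  · -- range
    intro hle
    have hmem : (![0, 1] : Fin 2 → ℝ) ∈ LinearMap.range B.mulVecLin := by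
      exact ⟨![1], by ext i; fin_cases i <;> simp [B, Matrix.mulVec, Fin.sum_univ_one]⟩
    obtain ⟨c, hc⟩ := hle hmem
    have := congrFun hc 1
    simp [B₁, Matrix.mulVec, Fin.sum_univ_one, dotProduct] at this
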